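/- With B, k, S_γ, s_γ as above and U(w) := (S_γ − w̄I)(S_γ − wI)^{-1} the Cayley transform for nonreal w: s_γ(w̄)·k(z,w̄) = s_γ(w)·U(w)k(z,w) for all z ∈ ℂ. -/

import Mathlib

open Complex

/-- `e^#(z) = conj (e (conj z))`. -/
noncomputable def eSharp (e : ℂ → ℂ) (z : ℂ) : ℂ :=
  (starRingEnd ℂ) (e ((starRingEnd ℂ) z))

/-- `s_γ(z) = (i/2)(e^{iγ} e(z) - e^{-iγ} e^#(z))`. -/
noncomputable def sfun (e : ℂ → ℂ) (γ : ℝ) (z : ℂ) : ℂ :=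
  I / 2 * (Complex.exp (I * γ) * e z - Complex.exp (-(I * (γ : ℂ))) * eSharp e z)

/-- The de Branges reproducing kernel
`k(z,w) = (e^#(z) e(w̄) - e(z) e^#(w̄)) / (2πi (z - w̄))`. -/
noncomputable def kfun (e : ℂ → ℂ) (z w : ℂ) : ℂ :=
  (eSharp e z * e ((starRingEnd ℂ) w) - e z * eSharp e ((starRingEnd ℂ) w)) /
    (2 * (Real.pi : ℂ) * I * (z - (starRingEnd ℂ) w))

/-- The action of the resolvent `(S_γ - wI)⁻¹` of the canonical selfadjoint extension
`S_γ` of the multiplication operator: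
`((S_γ - wI)⁻¹ f)(z) = (f(z) - (s_γ(z)/s_γ(w)) f(w)) / (z - w)`. -/
noncomputable def res (e : ℂ → ℂ) (γ : ℝ) (w : ℂ) (f : ℂ → ℂ) (z : ℂ) : ℂ :=
  (f z - sfun e γ z / sfun e γ w * f w) / (z - w)

lemma aux13 (a1 a2 a3 n1 n2 n3 D zw wc zc : ℂ) (hD : D ≠ 0) (hzw : zw ≠ 0)
    (hzc : zc ≠ 0) (hwc : wc ≠ 0) (ha2 : a2 ≠ 0) (hsub : zc = zw + wc)
    (key : a1 * n1 = a2 * n2 - a3 * n3) :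
    a1 * (n1 / (D * zw))
      = a2 * (n2 / (D * zc) + wc * ((n2 / (D * zc) - a3 / a2 * (n3 / (D * wc))) / zw)) := by
  have step : n2 / (D * zc) - a3 / a2 * (n3 / (D * wc))
      = (a2 * n2 * wc - a3 * n3 * zc) / (a2 * D * zc * wc) := by
    field_simp
  have step2 : n2 / (D * zc) + wc * ((a2 * n2 * wc - a3 * n3 * zc) / (a2 * D * zc * wc) / zw)
      = (a2 * n2 - a3 * n3) / (a2 * (D * zw)) := by
    have hDzc : D * zc ≠ 0 := mul_ne_zero hD hzc
    have hbig : a2 * D * zc * wc * zw ≠ 0 := by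
      exact mul_ne_zero (mul_ne_zero (mul_ne_zero (mul_ne_zero ha2 hD) hzc) hwc) hzw
    have haDzw : a2 * (D * zw) ≠ 0 := mul_ne_zero ha2 (mul_ne_zero hD hzw)
    rw [div_div, mul_div_assoc', div_add_div _ _ hDzc hbig,
      div_eq_div_iff (mul_ne_zero hDzc hbig) haDzw]
    linear_combination (-(a2^2 * n2 * D^2 * zw * wc * zc)) * hsub
  rw [step, step2, ← key]
  field_simp

/-- For nonreal `w` (with `s_γ(w), s_γ(w̄) ≠ 0`), and the Cayley transform
`U(w) = (S_γ - w̄I)(S_γ - wI)⁻¹ = I + (w - w̄)(S_γ - wI)⁻¹`: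
`s_γ(w̄)·k(z,w̄) = s_γ(w)·(U(w) k(·,w))(z)`. -/
theorem stmt13 (e : ℂ → ℂ) (he : Differentiable ℂ e) (γ : ℝ) (w : ℂ) (hw : w.im ≠ 0)
    (hsw : sfun e γ w ≠ 0) (hsw' : sfun e γ ((starRingEnd ℂ) w) ≠ 0)
    (z : ℂ) (hz : z ≠ w) :
    sfun e γ ((starRingEnd ℂ) w) * kfun e z ((starRingEnd ℂ) w)
      = sfun e γ w *
        (kfun e z w + (w - (starRingEnd ℂ) w) * res e γ w (fun u => kfun e u w) z) := by
  have hcc : (starRingEnd ℂ) ((starRingEnd ℂ) w) = w := Complex.conj_conj w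
  have hwc : w - (starRingEnd ℂ) w ≠ 0 := by
    rw [sub_ne_zero]
    intro h
    exact hw (Complex.conj_eq_iff_im.mp h.symm)
  have hzw : z - w ≠ 0 := sub_ne_zero.mpr hz
  have hD : (2 * (Real.pi : ℂ) * I) ≠ 0 := by
    simp [Real.pi_ne_zero, I_ne_zero, Complex.ofReal_ne_zero]
  have key : sfun e γ ((starRingEnd ℂ) w) * (eSharp e z * e w - e z * eSharp e w)
      = sfun e γ w * (eSharp e z * e ((starRingEnd ℂ) w) - e z * eSharp e ((starRingEnd ℂ) w))
        - sfun e γ z * (eSharp e w * e ((starRingEnd ℂ) w) - e w * eSharp e ((starRingEnd ℂ) w)) := by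
    simp only [sfun]; ring
  by_cases hzc : z = (starRingEnd ℂ) w
  · subst hzc
    have hcw : (starRingEnd ℂ) w - w ≠ 0 := by
      intro h; exact hwc (by rw [← neg_sub] at h; simpa using congrArg Neg.neg h)
    have h0 : kfun e ((starRingEnd ℂ) w) w = 0 := by
      simp [kfun, sub_self]
    have hK : kfun e ((starRingEnd ℂ) w) ((starRingEnd ℂ) w) = kfun e w w := by
      simp only [kfun, hcc]
      rw [div_eq_div_iff (mul_ne_zero hD hcw) (mul_ne_zero hD hwc)]
      ring
    rw [h0, hK]
    simp only [res, h0]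
    field_simp
    ring
  · have hzc' : z - (starRingEnd ℂ) w ≠ 0 := sub_ne_zero.mpr hzc
    simp only [kfun, res, hcc]
    exact aux13 _ _ _ _ _ _ _ _ _ _ hD hzw hzc' hwc hsw (by ring) key
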